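/- Let Λ be a ring in which p^{i+1} = 0 for a prime p. Then for every positive integer n and every integer k with 1 ≤ k ≤ p^{n+i}, if p^n does not divide k then the binomial coefficient C(p^{n+i}, k) is zero in Λ (i.e., is divisible by p^{i+1} in ℤ). -/

import Mathlib

/-- If `p^(i+1) = 0` in a ring `Λ`, then for `1 ≤ k ≤ p^(n+i)` with `p^n ∤ k`, the binomial
coefficient `C(p^(n+i), k)` is zero in `Λ`, i.e. it is divisible by `p^(i+1)` in `ℤ`. -/
theorem binom_zero_of_not_dvd (p i n k : ℕ) (hp : p.Prime) (hn : 1 ≤ n)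
    (hk1 : 1 ≤ k) (hk2 : k ≤ p ^ (n + i)) (hnd : ¬ p ^ n ∣ k)
    (Λ : Type*) [Ring Λ] (hΛ : (p : Λ) ^ (i + 1) = 0) :
    ((Nat.choose (p ^ (n + i)) k : Λ) = 0) ∧ p ^ (i + 1) ∣ Nat.choose (p ^ (n + i)) k := by
  have hk0 : k ≠ 0 := by omega
  have hfin : FiniteMultiplicity p k :=
    Nat.finiteMultiplicity_iff.2 ⟨hp.ne_one, Nat.pos_of_ne_zero hk0⟩
  have hmlt : multiplicity p k < n := by
    by_contra h
    exact hnd (dvd_trans (pow_dvd_pow p (le_of_not_gt h)) (pow_multiplicity_dvd p k))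
  have hdvd : p ^ (i + 1) ∣ Nat.choose (p ^ (n + i)) k := by
    have := Nat.Prime.emultiplicity_choose_prime_pow hp hk2 hk0
    refine pow_dvd_of_le_emultiplicity ?_
    rw [this]
    exact_mod_cast (by omega : i + 1 ≤ n + i - multiplicity p k)
  refine ⟨?_, hdvd⟩
  obtain ⟨m, hm⟩ := hdvd
  have : ((Nat.choose (p ^ (n + i)) k : ℕ) : Λ) = ((p ^ (i + 1) * m : ℕ) : Λ) := by rw [hm]
  rw [this]
  push_cast
  rw [hΛ, zero_mul]
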